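/- Fix an integer g ≥ 2, a real t > 0, and set q = e^{−t/2}. For every integer N ≥ 2, define Z_N = Σ_λ q^{c₂(λ)} d_λ^{2−2g}, the sum over all nonincreasing tuples λ ∈ ℤ^N, where d_λ = ∏_{1≤i<j≤N} (λ_i − λ_j + j − i)/(j − i) and c₂(λ) = (1/N)(Σ_i λ_i² + Σ_{i<j} (λ_i − λ_j)). Then 0 ≤ Z_N − θ(q) ≤ θ(q) · Σ_{μ ≠ 0} d_μ^{2−2g}, where θ(q) = Σ_{n∈ℤ} q^{n²} and the last sum is over all nonzero nonincreasing tuples μ ∈ ℤ^N of nonnegative integers with μ_N = 0. -/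

import Mathlib

/-- The Weyl dimension of a nonincreasing tuple `λ ∈ ℤ^N`:
`d_λ = ∏_{1 ≤ i < j ≤ N} (λ_i − λ_j + j − i)/(j − i)`. -/
def weylDim (N : ℕ) (l : Fin N → ℤ) : ℚ :=
  ∏ p ∈ Finset.univ.filter (fun p : Fin N × Fin N => p.1 < p.2),
    (((l p.1 : ℚ) - (l p.2 : ℚ) + ((p.2 : ℕ) : ℚ) - ((p.1 : ℕ) : ℚ)) /
      (((p.2 : ℕ) : ℚ) - ((p.1 : ℕ) : ℚ)))

/-- The Casimir number of a nonincreasing tuple `λ ∈ ℤ^N`: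
`c₂(λ) = (1/N)(Σ_i λ_i² + Σ_{i<j} (λ_i − λ_j))`. -/
def casimir (N : ℕ) (l : Fin N → ℤ) : ℚ :=
  ((∑ i : Fin N, ((l i : ℚ)) ^ 2) +
    ∑ p ∈ Finset.univ.filter (fun p : Fin N × Fin N => p.1 < p.2),
      ((l p.1 : ℚ) - (l p.2 : ℚ))) / (N : ℚ)

/-- The Jacobi theta function `θ(q) = Σ_{n ∈ ℤ} q^{n²}`, with values in `[0,∞]`. -/
noncomputable def thetaE (q : ℝ) : ENNReal :=
  ∑' n : ℤ, ENNReal.ofReal (q ^ (n.natAbs ^ 2))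

/-- Migdal's formula: the `U(N)` Yang–Mills partition function on a genus-`g` surface of area
`t`, `Z_{U(N)}(g,t) = Σ_λ q^{c₂(λ)} d_λ^{2−2g}` with `q = e^{−t/2}`, summing over all
nonincreasing tuples `λ ∈ ℤ^N`, with values in `[0,∞]`. -/
noncomputable def ZUN (N : ℕ) (g : ℕ) (t : ℝ) : ENNReal :=
  ∑' l : {l : Fin N → ℤ // ∀ i j : Fin N, i ≤ j → l j ≤ l i},
    ENNReal.ofReal (Real.exp (-(t / 2)) ^ ((casimir N l.1 : ℝ)) *
      (weylDim N l.1 : ℝ) ^ (2 - 2 * (g : ℤ)))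

section YMaux
lemma pair_ineq {q x y u v : ℝ} (hq0 : 0 < q) (hq1 : q ≤ 1)
    (hux : x ≤ u) (hvx : x ≤ v) (hxy : x + y ≤ u + v) :
    q ^ u + q ^ v ≤ q ^ x + q ^ y := by
  have hw : q ^ (u - x) ≤ 1 := Real.rpow_le_one hq0.le hq1 (by linarith)
  have hu : q ^ u = q ^ x * q ^ (u - x) := by
    rw [← Real.rpow_add hq0]; ring_nf
  have huv : q ^ (u + v - x) = q ^ v * q ^ (u - x) := by
    rw [← Real.rpow_add hq0]; ring_nf
  have hy : q ^ (u + v - x) ≤ q ^ y :=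
    Real.rpow_le_rpow_of_exponent_ge hq0 hq1 (by linarith)
  have hvx' : q ^ v ≤ q ^ x := Real.rpow_le_rpow_of_exponent_ge hq0 hq1 hvx
  have h1 : q ^ x * q ^ (u - x) + q ^ v ≤ q ^ x + q ^ v * q ^ (u - x) := by
    nlinarith [Real.rpow_nonneg hq0.le (u - x)]
  calc q ^ u + q ^ v = q ^ x * q ^ (u - x) + q ^ v := by rw [hu]
    _ ≤ q ^ x + q ^ v * q ^ (u - x) := h1
    _ = q ^ x + q ^ (u + v - x) := by rw [huv]
    _ ≤ q ^ x + q ^ y := by linarith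

lemma shifted_theta_le {q b ε : ℝ} (hq0 : 0 < q) (hq1 : q ≤ 1)
    (hb0 : 0 ≤ b) (hb1 : b < 1) (hε : b * (1 - b) ≤ ε) :
    ∑' n : ℤ, ENNReal.ofReal (q ^ (((n : ℝ) + b) ^ 2 + ε)) ≤ thetaE q := by
  have hε0 : 0 ≤ ε := le_trans (by nlinarith) hε
  rw [thetaE]
  rw [← tsum_nat_add_neg_add_one (f := fun n : ℤ => ENNReal.ofReal (q ^ (((n : ℝ) + b) ^ 2 + ε)))
      ENNReal.summable]
  rw [← tsum_nat_add_neg_add_one (f := fun n : ℤ => ENNReal.ofReal (q ^ (n.natAbs ^ 2)))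
      ENNReal.summable]
  refine ENNReal.tsum_le_tsum fun k => ?_
  have h1 : (((k : ℤ) : ℝ) + b) = (k : ℝ) + b := by push_cast; ring
  have h2 : (((-((k : ℤ) + 1)) : ℤ) : ℝ) + b = -(((k : ℝ) + 1) - b) := by push_cast; ring
  have h3 : ((k : ℤ)).natAbs = k := Int.natAbs_natCast k
  have h4 : ((-((k : ℤ) + 1))).natAbs = k + 1 := by
    rw [Int.natAbs_neg]; exact_mod_cast Int.natAbs_natCast (k + 1)
  rw [h1, h2, h3, h4]
  have hnpow1 : q ^ (k ^ 2) = q ^ (((k : ℝ)) ^ 2) := by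
    rw [← Real.rpow_natCast q (k ^ 2)]; push_cast; ring_nf
  have hnpow2 : q ^ ((k + 1) ^ 2) = q ^ ((((k : ℝ)) + 1) ^ 2) := by
    rw [← Real.rpow_natCast q ((k + 1) ^ 2)]; push_cast; ring_nf
  rw [hnpow1, hnpow2]
  have hneg : (-(((k : ℝ) + 1) - b)) ^ 2 = (((k : ℝ) + 1) - b) ^ 2 := by ring
  rw [hneg]
  have hk0 : (0 : ℝ) ≤ (k : ℝ) := Nat.cast_nonneg k
  have key : q ^ (((k : ℝ) + b) ^ 2 + ε) + q ^ ((((k : ℝ) + 1) - b) ^ 2 + ε)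
      ≤ q ^ (((k : ℝ)) ^ 2) + q ^ ((((k : ℝ)) + 1) ^ 2) :=
    pair_ineq hq0 hq1 (by nlinarith) (by nlinarith) (by nlinarith)
  have hnn : ∀ z : ℝ, 0 ≤ q ^ z := fun z => Real.rpow_nonneg hq0.le z
  rw [← ENNReal.ofReal_add (hnn _) (hnn _), ← ENNReal.ofReal_add (hnn _) (hnn _)]
  exact ENNReal.ofReal_le_ofReal key

lemma weylDim_shift (N : ℕ) (n : ℤ) (μ : Fin N → ℤ) :
    weylDim N (fun i => n + μ i) = weylDim N μ := by
  unfold weylDim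
  refine Finset.prod_congr rfl fun p _ => ?_
  push_cast; ring_nf

lemma weylDim_const (N : ℕ) (n : ℤ) : weylDim N (fun _ => n) = 1 := by
  unfold weylDim
  refine Finset.prod_eq_one fun p hp => ?_
  simp only [Finset.mem_filter] at hp
  have h : ((p.1 : ℕ) : ℚ) < ((p.2 : ℕ) : ℚ) := by exact_mod_cast hp.2
  rw [sub_self, zero_add]
  exact div_self (by linarith)

lemma casimir_shift (N : ℕ) (hN : 0 < N) (n : ℤ) (μ : Fin N → ℤ) :
    casimir N (fun i => n + μ i)
      = (n : ℚ) ^ 2 + 2 * n * ((∑ i : Fin N, (μ i : ℚ)) / N) + casimir N μ := by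
  unfold casimir
  have hNQ : (N : ℚ) ≠ 0 := Nat.cast_ne_zero.2 hN.ne'
  have h1 : (∑ i : Fin N, (((fun i => n + μ i) i : ℤ) : ℚ) ^ 2)
      = N * (n : ℚ) ^ 2 + 2 * n * (∑ i : Fin N, (μ i : ℚ)) + ∑ i : Fin N, (μ i : ℚ) ^ 2 := by
    have : ∀ i : Fin N, ((n + μ i : ℤ) : ℚ) ^ 2
        = (n : ℚ) ^ 2 + 2 * n * (μ i : ℚ) + (μ i : ℚ) ^ 2 := by
      intro i; push_cast; ring
    rw [Finset.sum_congr rfl fun i _ => this i]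
    rw [Finset.sum_add_distrib, Finset.sum_add_distrib, ← Finset.mul_sum,
      Finset.sum_const, Finset.card_univ, Fintype.card_fin]
    ring
  have h2 : (∑ p ∈ Finset.univ.filter (fun p : Fin N × Fin N => p.1 < p.2),
        (((n + μ p.1 : ℤ) : ℚ) - ((n + μ p.2 : ℤ) : ℚ)))
      = ∑ p ∈ Finset.univ.filter (fun p : Fin N × Fin N => p.1 < p.2),
        ((μ p.1 : ℚ) - (μ p.2 : ℚ)) := by
    refine Finset.sum_congr rfl fun p _ => ?_; push_cast; ring
  simp only at h1 h2 ⊢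
  rw [h1, h2]
  field_simp
  ring

lemma casimir_const (N : ℕ) (hN : 0 < N) (n : ℤ) :
    casimir N (fun _ => n) = (n : ℚ) ^ 2 := by
  unfold casimir
  have hNQ : (N : ℚ) ≠ 0 := Nat.cast_ne_zero.2 hN.ne'
  rw [Finset.sum_const, Finset.card_univ, Fintype.card_fin]
  simp [sub_self, hNQ]

lemma casimir_lower (N : ℕ) (hN : 2 ≤ N) (μ : Fin N → ℤ)
    (hmono : ∀ i j : Fin N, i ≤ j → μ j ≤ μ i) (hnn : ∀ i, 0 ≤ μ i)
    (hlast : μ ⟨N - 1, Nat.sub_lt (by omega) one_pos⟩ = 0) :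
    (∑ i : Fin N, (μ i : ℚ)) / N + ((∑ i : Fin N, (μ i : ℚ)) / N) ^ 2 ≤ casimir N μ := by
  have hNQ : (0 : ℚ) < N := by exact_mod_cast (by omega : 0 < N)
  set S : ℚ := ∑ i : Fin N, (μ i : ℚ) with hS
  set A : ℚ := ∑ i : Fin N, (μ i : ℚ) ^ 2 with hA
  set P := Finset.univ.filter (fun p : Fin N × Fin N => p.1 < p.2) with hP
  set D : ℚ := ∑ p ∈ P, ((μ p.1 : ℚ) - (μ p.2 : ℚ)) with hD
  -- Cauchy-Schwarz
  have hCS : S ^ 2 ≤ N * A := by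
    have := sq_sum_le_card_mul_sum_sq (s := (Finset.univ : Finset (Fin N)))
      (f := fun i => (μ i : ℚ))
    simpa [Finset.card_univ] using this
  -- D ≥ S
  have hlt : N - 1 < N := Nat.sub_lt (by omega) one_pos
  set last : Fin N := ⟨N - 1, hlt⟩ with hlastdef
  have hle_last : ∀ i : Fin N, i ≤ last := by
    intro i
    have := i.2
    exact Fin.mk_le_mk.mpr (by omega) |>.trans_eq rfl
  set Q := (Finset.univ.erase last).image (fun i : Fin N => (i, last)) with hQ
  have hQP : Q ⊆ P := by
    intro p hp
    simp only [hQ, Finset.mem_image, Finset.mem_erase] at hp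
    obtain ⟨i, ⟨hne, -⟩, rfl⟩ := hp
    simp only [hP, Finset.mem_filter, Finset.mem_univ, true_and]
    exact lt_of_le_of_ne (hle_last i) hne
  have hsumQ : ∑ p ∈ Q, ((μ p.1 : ℚ) - (μ p.2 : ℚ)) = S := by
    rw [hQ, Finset.sum_image (by intro a _ b _ h; exact (Prod.mk.injEq _ _ _ _).mp h |>.1)]
    simp only [hlast, Int.cast_zero, sub_zero]
    rw [Finset.sum_erase_eq_sub (Finset.mem_univ last)]
    simp [hS, hlast]
  have hDS : S ≤ D := by
    rw [← hsumQ]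
    refine Finset.sum_le_sum_of_subset_of_nonneg hQP ?_
    intro p hp _
    simp only [hP, Finset.mem_filter] at hp
    have := hmono p.1 p.2 hp.2.le
    simp only [sub_nonneg]
    exact_mod_cast this
  have hcas : casimir N μ = (A + D) / N := rfl
  rw [hcas]
  have h1 : S / N + (S / N) ^ 2 = (N * S + S ^ 2) / N ^ 2 := by field_simp
  have h2 : (A + D) / N = (N * (A + D)) / N ^ 2 := by field_simp
  rw [h1, h2]
  have hkey : N * S + S ^ 2 ≤ N * (A + D) := by nlinarith
  exact div_le_div_of_nonneg_right hkey (by positivity) |>.trans_eq rfl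

lemma tail_le {q : ℝ} (hq0 : 0 < q) (hq1 : q ≤ 1) (N : ℕ) (hN : 2 ≤ N)
    (μ : Fin N → ℤ) (hmono : ∀ i j : Fin N, i ≤ j → μ j ≤ μ i) (hnn : ∀ i, 0 ≤ μ i)
    (hlast : μ ⟨N - 1, Nat.sub_lt (by omega) one_pos⟩ = 0) :
    ∑' n : ℤ, ENNReal.ofReal (q ^ ((casimir N (fun i => n + μ i) : ℝ))) ≤ thetaE q := by
  have hN0 : (0 : ℝ) < N := by exact_mod_cast (by omega : 0 < N)
  set Sq : ℚ := ∑ i : Fin N, (μ i : ℚ) with hSq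
  set a : ℝ := (Sq : ℝ) / N with ha
  set c : ℝ := ((casimir N μ : ℚ) : ℝ) with hc
  have hSq0 : 0 ≤ Sq := Finset.sum_nonneg fun i _ => by exact_mod_cast hnn i
  have ha0 : 0 ≤ a := div_nonneg (by exact_mod_cast hSq0) hN0.le
  set k0 : ℤ := ⌊a⌋ with hk0
  set b : ℝ := a - k0 with hb
  set ε : ℝ := c - a ^ 2 with hε
  have hb0 : 0 ≤ b := by
    have := Int.floor_le a; simp [hb]; linarith
  have hb1 : b < 1 := by
    have := Int.lt_floor_add_one a; simp [hb]; linarith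
  have hk00 : (0 : ℝ) ≤ (k0 : ℝ) := by
    exact_mod_cast Int.floor_nonneg.2 ha0
  have hεa : a ≤ ε := by
    have h := casimir_lower N hN μ hmono hnn hlast
    rw [← hSq] at h
    have h' : ((Sq / N + (Sq / N) ^ 2 : ℚ) : ℝ) ≤ ((casimir N μ : ℚ) : ℝ) :=
      Rat.cast_le.mpr h
    rw [← hc] at h' 
    push_cast at h'
    rw [hε, ha]
    push_cast
    linarith [h']
  have hεb : b * (1 - b) ≤ ε := by nlinarith
  -- reindex
  have hre := Equiv.tsum_eq (Equiv.subRight k0)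
    (fun n : ℤ => ENNReal.ofReal (q ^ ((casimir N (fun i => n + μ i) : ℝ))))
  rw [← hre]
  have hterm : ∀ n : ℤ,
      ENNReal.ofReal (q ^ ((casimir N (fun i => (Equiv.subRight k0) n + μ i) : ℝ)))
        = ENNReal.ofReal (q ^ (((n : ℝ) + b) ^ 2 + ε)) := by
    intro n
    congr 1
    congr 1
    have hcs := casimir_shift N (by omega) (n - k0) μ
    rw [← hSq] at hcs
    have h2 : ((casimir N (fun i => n - k0 + μ i) : ℚ) : ℝ)
        = ((n : ℝ) - k0) ^ 2 + 2 * ((n : ℝ) - k0) * a + c := by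
      rw [hcs]; push_cast; rw [ha, hc]
    simp only [Equiv.subRight_apply]
    rw [h2, hb, hε]
    ring
  calc ∑' n : ℤ, ENNReal.ofReal (q ^ ((casimir N (fun i => (Equiv.subRight k0) n + μ i) : ℝ)))
      = ∑' n : ℤ, ENNReal.ofReal (q ^ (((n : ℝ) + b) ^ 2 + ε)) := tsum_congr hterm
    _ ≤ thetaE q := shifted_theta_le hq0 hq1 hb0 hb1 hεb

end YMaux

/-- For `g ≥ 2`, `t > 0`, `q = e^{−t/2}` and `N ≥ 2`:
`0 ≤ Z_N − θ(q) ≤ θ(q) · Σ_{μ ≠ 0} d_μ^{2−2g}`, where the last sum runs over the nonzero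
nonincreasing tuples `μ ∈ ℤ^N` of nonnegative integers with `μ_N = 0`. -/
theorem ZUN_sub_theta_bound (g : ℕ) (hg : 2 ≤ g) (t : ℝ) (ht : 0 < t)
    (N : ℕ) (hN : 2 ≤ N) :
    thetaE (Real.exp (-(t / 2))) ≤ ZUN N g t ∧
    ZUN N g t - thetaE (Real.exp (-(t / 2))) ≤
      thetaE (Real.exp (-(t / 2))) *
        ∑' m : {m : Fin N → ℤ // (∀ i j : Fin N, i ≤ j → m j ≤ m i) ∧
            (∀ i : Fin N, 0 ≤ m i) ∧ (∀ h : N - 1 < N, m ⟨N - 1, h⟩ = 0) ∧ m ≠ 0},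
          ENNReal.ofReal ((weylDim N m.1 : ℝ) ^ (2 - 2 * (g : ℤ))) := by
  classical
  set q : ℝ := Real.exp (-(t / 2)) with hqdef
  have hq0 : 0 < q := Real.exp_pos _
  have hq1 : q ≤ 1 := Real.exp_le_one_iff.mpr (by linarith)
  set z : ℤ := 2 - 2 * (g : ℤ) with hz
  have hlt : N - 1 < N := Nat.sub_lt (by omega) one_pos
  set last : Fin N := ⟨N - 1, hlt⟩ with hlast
  have hle_last : ∀ i : Fin N, i ≤ last := fun i => by
    have := i.2; exact Fin.mk_le_mk.mpr (by omega) |>.trans_eq rfl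
  set L := {l : Fin N → ℤ // ∀ i j : Fin N, i ≤ j → l j ≤ l i} with hL
  set M' := {m : Fin N → ℤ // (∀ i j : Fin N, i ≤ j → m j ≤ m i) ∧
      (∀ i : Fin N, 0 ≤ m i) ∧ (∀ h : N - 1 < N, m ⟨N - 1, h⟩ = 0)} with hM'
  -- the equivalence
  let e : M' × ℤ ≃ L :=
    { toFun := fun p => ⟨fun i => p.2 + p.1.1 i,
        fun i j hij => by
          show p.2 + p.1.1 j ≤ p.2 + p.1.1 i
          have := p.1.2.1 i j hij; omega⟩
      invFun := fun l => (⟨fun i => l.1 i - l.1 last,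
        ⟨fun i j hij => by
          show l.1 j - l.1 last ≤ l.1 i - l.1 last
          have := l.2 i j hij; omega,
         fun i => by
          show 0 ≤ l.1 i - l.1 last
          have := l.2 i last (hle_last i); omega,
         fun h => by show l.1 ⟨N - 1, h⟩ - l.1 last = 0; rw [hlast]; omega⟩⟩, l.1 last)
      left_inv := fun p => by
        ext i
        · simp [p.1.2.2.2 hlt, hlast]
        · simp [p.1.2.2.2 hlt, hlast]
      right_inv := fun l => by
        ext i
        simp }
  set F : L → ENNReal := fun l =>
    ENNReal.ofReal (q ^ ((casimir N l.1 : ℝ)) * (weylDim N l.1 : ℝ) ^ z) with hF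
  have hZdef : ZUN N g t = ∑' l : L, F l := rfl
  set G : M' → ENNReal := fun m => ∑' n : ℤ,
      ENNReal.ofReal (q ^ ((casimir N (fun i => n + m.1 i) : ℝ)) *
        (weylDim N m.1 : ℝ) ^ z) with hG
  have hZ : ZUN N g t = ∑' m : M', G m := by
    rw [hZdef, ← Equiv.tsum_eq e F, ENNReal.tsum_prod']
    refine tsum_congr fun m => tsum_congr fun n => ?_
    simp only [hF, hG, e, Equiv.coe_fn_mk]
    rw [weylDim_shift]
  -- G bounded by theta * weyl factor
  have hGle : ∀ m : M', G m ≤ thetaE q * ENNReal.ofReal ((weylDim N m.1 : ℝ) ^ z) := by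
    intro m
    have : G m = (∑' n : ℤ,
        ENNReal.ofReal (q ^ ((casimir N (fun i => n + m.1 i) : ℝ)))) *
        ENNReal.ofReal ((weylDim N m.1 : ℝ) ^ z) := by
      rw [hG, ← ENNReal.tsum_mul_right]
      exact tsum_congr fun n => ENNReal.ofReal_mul (Real.rpow_nonneg hq0.le _)
    rw [this]
    exact mul_le_mul_left (tail_le hq0 hq1 N hN m.1 m.2.1 m.2.2.1 (m.2.2.2 hlt)) _
  -- the zero element
  set z0 : M' := ⟨0, fun i j _ => le_refl 0, fun i => le_refl 0, fun _ => rfl⟩ with hz0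
  have hG0 : G z0 = thetaE q := by
    rw [hG, thetaE]
    refine tsum_congr fun n => ?_
    have h1 : (fun i : Fin N => n + (0 : Fin N → ℤ) i) = fun _ => n := by
      funext i; simp
    simp only [hz0]
    have h0 : weylDim N (0 : Fin N → ℤ) = 1 := weylDim_const N 0
    rw [h1, casimir_const N (by omega), h0]
    have h2 : ((1 : ℚ) : ℝ) ^ z = 1 := by norm_num
    rw [h2, mul_one]
    congr 1
    rw [← Real.rpow_natCast q (n.natAbs ^ 2)]
    congr 1
    push_cast [Nat.cast_natAbs]
    rw [sq_abs]
  rw [hZ, ENNReal.tsum_eq_add_tsum_ite z0, hG0]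
  constructor
  · exact le_self_add
  · rw [tsub_le_iff_left]
    refine add_le_add_right ?_ _
    set Mst := {m : Fin N → ℤ // (∀ i j : Fin N, i ≤ j → m j ≤ m i) ∧
        (∀ i : Fin N, 0 ≤ m i) ∧ (∀ h : N - 1 < N, m ⟨N - 1, h⟩ = 0) ∧ m ≠ 0} with hMst
    set ι : Mst → M' := fun x => ⟨x.1, x.2.1, x.2.2.1, x.2.2.2.1⟩ with hι
    have hinj : Function.Injective ι := by
      intro x y h
      have h1 : (ι x).1 = (ι y).1 := congrArg Subtype.val h
      exact Subtype.ext h1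
    set f : M' → ENNReal := fun m =>
      if m = z0 then 0 else thetaE q * ENNReal.ofReal ((weylDim N m.1 : ℝ) ^ z) with hf
    have hsupp : Function.support f ⊆ Set.range ι := by
      intro m hm
      have hm0 : m ≠ z0 := by
        rintro rfl
        simp [hf] at hm
      have hm1 : m.1 ≠ 0 := fun h0 => hm0 (Subtype.ext h0)
      exact ⟨⟨m.1, m.2.1, m.2.2.1, m.2.2.2, hm1⟩, Subtype.ext rfl⟩
    have heq : ∑' x : Mst, f (ι x) = ∑' m : M', f m := hinj.tsum_eq hsupp
    have hfι : ∀ x : Mst, f (ι x) =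
        thetaE q * ENNReal.ofReal ((weylDim N x.1 : ℝ) ^ z) := by
      intro x
      have : ι x ≠ z0 := by
        intro h
        exact x.2.2.2.2 (congrArg Subtype.val h)
      rw [hf]
      simp only [if_neg this]
      rfl
    refine le_trans (ENNReal.tsum_le_tsum (g := f) fun m => ?_) ?_
    · by_cases h : m = z0
      · rw [if_pos h]
        exact zero_le
      · rw [if_neg h, hf]
        simp only [if_neg h]
        exact hGle m
    · show ∑' m : M', f m ≤
          thetaE q * ∑' x : Mst, ENNReal.ofReal ((weylDim N x.1 : ℝ) ^ z)
      calc ∑' m : M', f m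
          = ∑' x : Mst, f (ι x) := heq.symm
        _ = ∑' x : Mst, thetaE q * ENNReal.ofReal ((weylDim N x.1 : ℝ) ^ z) :=
            tsum_congr hfι
        _ = thetaE q * ∑' x : Mst, ENNReal.ofReal ((weylDim N x.1 : ℝ) ^ z) :=
            ENNReal.tsum_mul_left
        _ ≤ thetaE q * ∑' x : Mst, ENNReal.ofReal ((weylDim N x.1 : ℝ) ^ z) := le_rfl
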